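/- For each integer p ≥ 2, let G_p be the graph with a clique U = {u_1,…,u_p}, vertex s joined to each u_i by the path s x_i u_i, and vertex t joined to each u_i by the path t y_i u_i. Then Divider with 2 agents has a winning strategy in the rendezvous game on G_p starting from s and t; that is, d_{G_p}(s,t) ≤ 2, so λ_{G_p}(s,t) − d_{G_p}(s,t) ≥ p − 2. -/
import Mathlib


namespace Rendezvous

variable {V : Type*}

/-- One agent's move: stay put or move along an edge. -/
def Step (G : SimpleGraph V) (a b : V) : Prop := a = b ∨ G.Adj a b

/-- Adjacency of multisets of agent positions: there is a bijective pairing such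
that every agent stays put or moves along an edge. -/
def MAdj (G : SimpleGraph V) (D D' : Multiset V) : Prop := Multiset.Rel (Step G) D D'

/-- `FWin G n a b D`: with Facilitator's agents on `a`, `b`, Divider's agents on the
multiset `D`, and Facilitator to move, Facilitator can force his two agents to meet
within at most `n` moves, whatever Divider does. -/
def FWin (G : SimpleGraph V) : ℕ → V → V → Multiset V → Prop
  | 0, a, b, _ => a = b
  | n + 1, a, b, D => a = b ∨ ∃ a' b', Step G a a' ∧ Step G b b' ∧ a' ∉ D ∧ b' ∉ D ∧
      (a' = b' ∨ ∀ D', MAdj G D D' → a' ∉ D' → b' ∉ D' → FWin G n a' b' D')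

/-- Divider with `k` agents has a winning strategy in the rendezvous game on `G`
starting from `s` and `t`: there is an initial placement from which Facilitator can
never force a meeting. -/
def DividerWins (G : SimpleGraph V) (s t : V) (k : ℕ) : Prop :=
  ∃ D : Multiset V, Multiset.card D = k ∧ s ∉ D ∧ t ∉ D ∧ ∀ n, ¬ FWin G n s t D

/-- `d_G(s,t)`: the minimum number of Divider agents sufficient for Divider to win
(`⊤` if no number suffices, e.g. when `s = t` or `s`, `t` are adjacent). -/
noncomputable def dNum (G : SimpleGraph V) (s t : V) : ℕ∞ :=
  sInf {n : ℕ∞ | ∃ k : ℕ, (k : ℕ∞) = n ∧ DividerWins G s t k}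

/-- A vertex `(s,t)`-separator: a set of vertices avoiding `s` and `t` meeting
every walk from `s` to `t`. -/
def IsSeparator (G : SimpleGraph V) (s t : V) (S : Finset V) : Prop :=
  s ∉ S ∧ t ∉ S ∧ ∀ p : G.Walk s t, ∃ v ∈ p.support, v ∈ S

/-- `λ_G(s,t)`: minimum size of a vertex `(s,t)`-separator (`⊤` if none exists). -/
noncomputable def lambdaNum (G : SimpleGraph V) (s t : V) : ℕ∞ :=
  sInf {n : ℕ∞ | ∃ S : Finset V, (S.card : ℕ∞) = n ∧ IsSeparator G s t S}

end Rendezvous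

namespace Rendezvous

/-- Vertices of the graph `G_p`: a clique `u_1, …, u_p`, vertices `s`, `t`, and the
internal vertices `x_i` of the paths `s x_i u_i` and `y_i` of the paths `t y_i u_i`. -/
inductive RV (p : ℕ) where
  | s : RV p
  | t : RV p
  | u (i : Fin p) : RV p
  | x (i : Fin p) : RV p
  | y (i : Fin p) : RV p
deriving DecidableEq

/-- The edges of `G_p` (up to symmetrization): `U = {u_1,…,u_p}` is a clique, `s` is
joined to each `u_i` by the path `s x_i u_i`, and `t` to each `u_i` by `t y_i u_i`. -/
def rvRel (p : ℕ) : RV p → RV p → Prop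
  | .s, .x _ => True
  | .x i, .u j => i = j
  | .u _, .u _ => True
  | .u i, .y j => i = j
  | .y _, .t => True
  | _, _ => False

/-- The graph `G_p`. -/
def Gp (p : ℕ) : SimpleGraph (RV p) := SimpleGraph.fromRel (rvRel p)

end Rendezvous

open Rendezvous

namespace Rendezvous

variable {p : ℕ}

lemma gp_adj_iff {a b : RV p} : (Gp p).Adj a b ↔ a ≠ b ∧ (rvRel p a b ∨ rvRel p b a) :=
  Iff.rfl

lemma step_u (k i : Fin p) : Step (Gp p) (RV.u k) (RV.u i) := by
  by_cases h : k = i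
  · exact Or.inl (by rw [h])
  · exact Or.inr ⟨by simp [h], Or.inl trivial⟩

lemma step_from_s {a' : RV p} (h : Step (Gp p) RV.s a') :
    a' = RV.s ∨ ∃ i, a' = RV.x i := by
  rcases h with rfl | h
  · exact Or.inl rfl
  · rcases h with ⟨-, h | h⟩ <;> cases a' <;> simp_all [rvRel]

lemma step_from_t {b' : RV p} (h : Step (Gp p) RV.t b') :
    b' = RV.t ∨ ∃ j, b' = RV.y j := by
  rcases h with rfl | h
  · exact Or.inl rfl
  · rcases h with ⟨-, h | h⟩ <;> cases b' <;> simp_all [rvRel]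

lemma step_from_x {i : Fin p} {a' : RV p} (h : Step (Gp p) (RV.x i) a') :
    a' = RV.x i ∨ a' = RV.s ∨ a' = RV.u i := by
  rcases h with rfl | h
  · exact Or.inl rfl
  · rcases h with ⟨-, h | h⟩ <;> cases a' <;> simp_all [rvRel]

lemma step_from_y {j : Fin p} {b' : RV p} (h : Step (Gp p) (RV.y j) b') :
    b' = RV.y j ∨ b' = RV.t ∨ b' = RV.u j := by
  rcases h with rfl | h
  · exact Or.inl rfl
  · rcases h with ⟨-, h | h⟩ <;> cases b' <;> simp_all [rvRel]

lemma inv_not_fwin : ∀ (n : ℕ) (a b : RV p) (i j : Fin p),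
    (a = RV.s ∨ a = RV.x i) → (b = RV.t ∨ b = RV.y j) →
    ¬ FWin (Gp p) n a b ({RV.u i, RV.u j} : Multiset (RV p)) := by
  intro n
  induction n with
  | zero =>
    intro a b i j ha hb h
    rcases ha with rfl | rfl <;> rcases hb with rfl | rfl <;> simp [FWin] at h
  | succ n ih =>
    intro a b i j ha hb h
    rcases h with heq | ⟨a', b', hsa, hsb, haD, hbD, hrest⟩
    · rcases ha with rfl | rfl <;> rcases hb with rfl | rfl <;> simp_all
    -- a' stays in {s} ∪ {x _}
    have ha' : ∃ i', a' = RV.s ∨ a' = RV.x i' := by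
      rcases ha with rfl | rfl
      · rcases step_from_s hsa with rfl | ⟨i', rfl⟩
        · exact ⟨i, Or.inl rfl⟩
        · exact ⟨i', Or.inr rfl⟩
      · rcases step_from_x hsa with rfl | rfl | rfl
        · exact ⟨i, Or.inr rfl⟩
        · exact ⟨i, Or.inl rfl⟩
        · exact absurd (by simp) haD
    have hb' : ∃ j', b' = RV.t ∨ b' = RV.y j' := by
      rcases hb with rfl | rfl
      · rcases step_from_t hsb with rfl | ⟨j', rfl⟩
        · exact ⟨j, Or.inl rfl⟩
        · exact ⟨j', Or.inr rfl⟩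
      · rcases step_from_y hsb with rfl | rfl | rfl
        · exact ⟨j, Or.inr rfl⟩
        · exact ⟨j, Or.inl rfl⟩
        · exact absurd (by simp) hbD
    obtain ⟨i', hai'⟩ := ha'
    obtain ⟨j', hbj'⟩ := hb'
    have hne : a' ≠ b' := by
      rcases hai' with rfl | rfl <;> rcases hbj' with rfl | rfl <;> simp
    rcases hrest with heq' | hall
    · exact hne heq'
    · refine ih a' b' i' j' hai' hbj'
        (hall ({RV.u i', RV.u j'} : Multiset (RV p))
          (Multiset.Rel.cons (step_u i i') (Multiset.Rel.cons (step_u j j') Multiset.Rel.zero))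
          ?_ ?_)
      · rcases hai' with rfl | rfl <;> simp
      · rcases hbj' with rfl | rfl <;> simp

lemma adj_sx (i : Fin p) : (Gp p).Adj RV.s (RV.x i) := ⟨by simp, Or.inl trivial⟩
lemma adj_xu (i : Fin p) : (Gp p).Adj (RV.x i) (RV.u i) := ⟨by simp, Or.inl rfl⟩
lemma adj_uy (i : Fin p) : (Gp p).Adj (RV.u i) (RV.y i) := ⟨by simp, Or.inl rfl⟩
lemma adj_yt (i : Fin p) : (Gp p).Adj (RV.y i) RV.t := ⟨by simp, Or.inl trivial⟩

/-- The path `s x_i u_i y_i t`. -/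
def pathW (i : Fin p) : (Gp p).Walk RV.s RV.t :=
  .cons (adj_sx i) (.cons (adj_xu i) (.cons (adj_uy i) (.cons (adj_yt i) .nil)))

lemma lambda_ge (p : ℕ) : (p : ℕ∞) ≤ lambdaNum (Gp p) RV.s RV.t := by
  refine le_sInf ?_
  rintro n ⟨S, rfl, hs, ht, hsep⟩
  have key : ∀ i : Fin p, ∃ v ∈ S, v = RV.x i ∨ v = RV.u i ∨ v = RV.y i := by
    intro i
    obtain ⟨v, hv, hvS⟩ := hsep (pathW i)
    simp only [pathW, SimpleGraph.Walk.support_cons, SimpleGraph.Walk.support_nil,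
      List.mem_cons, List.mem_singleton] at hv
    rcases hv with rfl | rfl | rfl | rfl | (rfl | h)
    · exact absurd hvS hs
    · exact ⟨_, hvS, Or.inl rfl⟩
    · exact ⟨_, hvS, Or.inr (Or.inl rfl)⟩
    · exact ⟨_, hvS, Or.inr (Or.inr rfl)⟩
    · exact absurd hvS ht
    · simp at h
  choose f hfS hf using key
  have hinj : Function.Injective f := by
    intro i i' h
    rcases hf i with h1 | h1 | h1 <;> rcases hf i' with h2 | h2 | h2 <;>
      rw [h1, h2] at h <;> simp_all
  calc (p : ℕ∞) = ((Finset.univ : Finset (Fin p)).card : ℕ∞) := by simp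
    _ ≤ (S.card : ℕ∞) := by
        exact_mod_cast Finset.card_le_card_of_injOn f (fun i _ => hfS i) hinj.injOn

end Rendezvous

/-- on the graph `G_p` (clique `u_1,…,u_p`, `s` joined to each `u_i` by
the path `s x_i u_i`, `t` joined to each `u_i` by the path `t y_i u_i`), Divider with
2 agents has a winning strategy starting from `s` and `t`; hence `d_{G_p}(s,t) ≤ 2`,
and so `λ_{G_p}(s,t) − d_{G_p}(s,t) ≥ p − 2`. -/
theorem divider_wins_Gp_with_two_agents (p : ℕ) (hp : 2 ≤ p) :
    DividerWins (Gp p) RV.s RV.t 2 ∧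
    dNum (Gp p) RV.s RV.t ≤ 2 ∧
    (p : ℕ∞) - 2 ≤ lambdaNum (Gp p) RV.s RV.t - dNum (Gp p) RV.s RV.t := by
  have hp0 : 0 < p := by omega
  set i0 : Fin p := ⟨0, hp0⟩
  have hDW : DividerWins (Gp p) RV.s RV.t 2 := by
    refine ⟨({RV.u i0, RV.u i0} : Multiset (RV p)), by simp, by simp, by simp, ?_⟩
    intro n
    exact inv_not_fwin n RV.s RV.t i0 i0 (Or.inl rfl) (Or.inl rfl)
  have hd : dNum (Gp p) RV.s RV.t ≤ 2 :=
    sInf_le ⟨2, by norm_num, hDW⟩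
  refine ⟨hDW, hd, ?_⟩
  calc (p : ℕ∞) - 2 ≤ lambdaNum (Gp p) RV.s RV.t - 2 :=
        tsub_le_tsub_right (lambda_ge p) 2
    _ ≤ lambdaNum (Gp p) RV.s RV.t - dNum (Gp p) RV.s RV.t :=
        tsub_le_tsub_left hd _
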